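/- arXiv:2306.17461 — 4 statements merged into one kernel-verified Lean document; each statement's English description precedes it below -/
import Mathlib

section
/- For all lists A, B, C, D over a type with decidable equality, if C.length = D.length then d(A, B) ≤ d(A ++ C, B ++ D). In particular, the edit distance between prefixes is non-decreasing along any diagonal of the DP grid. -/
/-- Costs for the Levenshtein distance (as in the former `Mathlib.Data.List.EditDistance.Defs`). -/
structure Levenshtein.Cost (α β δ : Type*) where
  delete : α → δ
  insert : β → δ
  substitute : α → β → δ

/-- The default unit costs (former Mathlib `Levenshtein.defaultCost`). -/
def Levenshtein.defaultCost {α : Type*} [DecidableEq α] : Levenshtein.Cost α α ℕ where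
  delete _ := 1
  insert _ := 1
  substitute a b := if a = b then 0 else 1

/-- The Levenshtein distance with costs `C` (same value as the former Mathlib `levenshtein`). -/
def levenshtein {α β δ : Type*} [AddZeroClass δ] [Min δ] (C : Levenshtein.Cost α β δ) :
    List α → List β → δ
  | [], [] => 0
  | [], y :: ys => C.insert y + levenshtein C [] ys
  | x :: xs, [] => C.delete x + levenshtein C xs []
  | x :: xs, y :: ys =>
      min (C.delete x + levenshtein C xs (y :: ys))
        (min (C.insert y + levenshtein C (x :: xs) ys) (C.substitute x y + levenshtein C xs ys))

/-- The unit-cost Levenshtein edit distance. -/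
def editDist {α : Type*} [DecidableEq α] (A B : List α) : ℕ :=
  levenshtein Levenshtein.defaultCost A B

section aux

variable {α : Type*} [DecidableEq α]

lemma editDist_nil_left (B : List α) : editDist [] B = B.length := by
  induction B with
  | nil => simp [editDist, levenshtein]
  | cons b B ih => simp [editDist, levenshtein, Levenshtein.defaultCost] at ih ⊢; omega

lemma editDist_nil_right (A : List α) : editDist A [] = A.length := by
  induction A with
  | nil => simp [editDist, levenshtein]
  | cons a A ih => simp [editDist, levenshtein, Levenshtein.defaultCost] at ih ⊢; omega

lemma editDist_cons_cons (a b : α) (A B : List α) :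
    editDist (a :: A) (b :: B) =
      min (1 + editDist A (b :: B))
        (min (1 + editDist (a :: A) B)
          ((if a = b then 0 else 1) + editDist A B)) := by
  simp [editDist, levenshtein, Levenshtein.defaultCost]

lemma length_le_editDist (A B : List α) : B.length ≤ A.length + editDist A B := by
  induction A generalizing B with
  | nil => simp [editDist_nil_left]
  | cons a A ih =>
    induction B with
    | nil => simp
    | cons b B ihB =>
      rw [editDist_cons_cons]
      have h1 := ih (b :: B)
      have h2 := ih B
      simp only [List.length_cons] at *
      omega

lemma length_le_editDist' (A B : List α) : A.length ≤ B.length + editDist A B := by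
  induction A generalizing B with
  | nil => simp
  | cons a A ih =>
    induction B with
    | nil => simp [editDist_nil_right]
    | cons b B ihB =>
      rw [editDist_cons_cons]
      have h1 := ih (b :: B)
      have h2 := ih B
      simp only [List.length_cons] at *
      omega

lemma editDist_le_append_single (A B : List α) (c d : α) :
    editDist A B ≤ editDist (A ++ [c]) (B ++ [d]) := by
  induction A generalizing B with
  | nil =>
    have h := length_le_editDist ([c]) (B ++ [d])
    simp [editDist_nil_left] at h ⊢
    omega
  | cons a A ih =>
    induction B with
    | nil =>
      have h := length_le_editDist' (A ++ [c]) ([d])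
      simp only [List.nil_append, List.cons_append] at *
      rw [editDist_cons_cons]
      simp only [editDist_nil_right, List.length_append, List.length_cons,
        List.length_nil] at *
      split_ifs <;> omega
    | cons b B ihB =>
      have h1 := ih (b :: B)
      have h2 := ih B
      simp only [List.cons_append] at *
      rw [editDist_cons_cons, editDist_cons_cons]
      split_ifs <;> omega

lemma editDist_le_append (A B C D : List α) (h : C.length = D.length) :
    editDist A B ≤ editDist (A ++ C) (B ++ D) := by
  induction C generalizing A B D with
  | nil =>
    cases D with
    | nil => simp
    | cons d D => simp at h
  | cons c C ih =>
    cases D with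
    | nil => simp at h
    | cons d D =>
      simp only [List.length_cons, Nat.add_right_cancel_iff] at h
      calc editDist A B ≤ editDist (A ++ [c]) (B ++ [d]) :=
            editDist_le_append_single A B c d
        _ ≤ editDist ((A ++ [c]) ++ C) ((B ++ [d]) ++ D) := ih _ _ _ h
        _ = editDist (A ++ c :: C) (B ++ d :: D) := by
            simp [List.append_assoc]

end aux

/-- Appending equal-length suffixes does not decrease the edit distance; in particular,
the edit distance between prefixes is non-decreasing along any diagonal of the DP grid. -/
theorem editDist_le_editDist_append {α : Type*} [DecidableEq α] :
    (∀ A B C D : List α, C.length = D.length →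
      editDist A B ≤ editDist (A ++ C) (B ++ D)) ∧
    (∀ (A B : List α) (x y x' y' : ℕ), x ≤ x' → y ≤ y' → x' - x = y' - y →
      x' ≤ A.length → y' ≤ B.length →
      editDist (A.take x) (B.take y) ≤ editDist (A.take x') (B.take y')) := by
  refine ⟨fun A B C D h => editDist_le_append A B C D h, ?_⟩
  intro A B x y x' y' hx hy hd hxA hyB
  have hA : A.take x' = A.take x ++ ((A.drop x).take (x' - x)) := by
    rw [← List.take_add]
    congr 1
    omega
  have hB : B.take y' = B.take y ++ ((B.drop y).take (y' - y)) := by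
    rw [← List.take_add]
    congr 1
    omega
  rw [hA, hB]
  apply editDist_le_append
  simp only [List.length_take, List.length_drop]
  omega
end

section
/- Base case of the Landau–Vishkin BFS: for a diagonal i with −m ≤ i ≤ n, the set S_0(i) is nonempty if and only if i = 0, and f(0,0) = lcp(A,B), the length of the longest common prefix of A and B. -/
@[simp]
theorem levenshtein_nil_nil {α β δ : Type*} [AddZeroClass δ] [Min δ] (C : Levenshtein.Cost α β δ) :
    levenshtein C [] [] = 0 := by
  rw [levenshtein]

theorem levenshtein_nil_cons {α β δ : Type*} [AddZeroClass δ] [Min δ] (C : Levenshtein.Cost α β δ)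
    (b : β) (bs : List β) :
    levenshtein C [] (b :: bs) = C.insert b + levenshtein C [] bs := by
  rw [levenshtein]

theorem levenshtein_cons_nil {α β δ : Type*} [AddZeroClass δ] [Min δ] (C : Levenshtein.Cost α β δ)
    (a : α) (as : List α) :
    levenshtein C (a :: as) [] = C.delete a + levenshtein C as [] := by
  rw [levenshtein]

theorem levenshtein_cons_cons {α β δ : Type*} [AddZeroClass δ] [Min δ] (C : Levenshtein.Cost α β δ)
    (a : α) (as : List α) (b : β) (bs : List β) :
    levenshtein C (a :: as) (b :: bs) =
      min (C.delete a + levenshtein C as (b :: bs))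
        (min (C.insert b + levenshtein C (a :: as) bs) (C.substitute a b + levenshtein C as bs)) := by
  rw [levenshtein]

/-- The longest-common-prefix length: the largest `l ≤ min(|A|, |B|)`
with `A.take l = B.take l`. -/
def lcp {α : Type*} [DecidableEq α] (A B : List α) : ℕ :=
  Nat.findGreatest (fun l => A.take l = B.take l) (min A.length B.length)

/-- `S_t(i)`: the set of points `x` in the domain of diagonal `i` whose prefix edit distance
`d_i(x) = d(A.take x, B.take (x - i))` is at most `t`. -/
def diagSet {α : Type*} [DecidableEq α] (A B : List α) (t : ℕ) (i : ℤ) : Set ℤ :=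
  {x | max 0 i ≤ x ∧ x ≤ min (A.length : ℤ) ((B.length : ℤ) + i) ∧
    editDist (A.take x.toNat) (B.take (x - i).toNat) ≤ t}


lemma levenshtein_self_eq_zero {α : Type*} [DecidableEq α] (A : List α) :
    levenshtein Levenshtein.defaultCost A A = 0 := by
  induction A with
  | nil => simp
  | cons a as ih =>
    rw [levenshtein_cons_cons]
    refine Nat.le_antisymm ?_ (Nat.zero_le _)
    refine le_trans (min_le_right _ _) (le_trans (min_le_right _ _) ?_)
    simpa [Levenshtein.defaultCost] using ih.le

lemma eq_of_levenshtein_eq_zero {α : Type*} [DecidableEq α] :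
    ∀ (A B : List α), levenshtein Levenshtein.defaultCost A B = 0 → A = B
  | [], [], _ => rfl
  | [], b :: bs, h => by
    rw [levenshtein_nil_cons] at h
    simp [Levenshtein.defaultCost] at h
  | a :: as, [], h => by
    rw [levenshtein_cons_nil] at h
    simp [Levenshtein.defaultCost] at h
  | a :: as, b :: bs, h => by
    rw [levenshtein_cons_cons] at h
    have h3 : Levenshtein.defaultCost.substitute a b +
        levenshtein Levenshtein.defaultCost as bs = 0 := by
      simp only [Levenshtein.defaultCost] at h ⊢
      omega
    have hab : a = b := by
      by_contra hne
      simp [Levenshtein.defaultCost, hne] at h3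
    have : levenshtein Levenshtein.defaultCost as bs = 0 := by omega
    rw [hab, eq_of_levenshtein_eq_zero as bs this]

lemma editDist_eq_zero_iff {α : Type*} [DecidableEq α] (A B : List α) :
    editDist A B = 0 ↔ A = B := by
  constructor
  · exact eq_of_levenshtein_eq_zero A B
  · rintro rfl; exact levenshtein_self_eq_zero A

/-- Base case of the Landau–Vishkin BFS: `S_0(i)` is nonempty iff `i = 0`, and
`f(0,0) = lcp(A,B)`. -/
theorem landau_vishkin_base {α : Type*} [DecidableEq α] (A B : List α) (i : ℤ)
    (hi₁ : -(B.length : ℤ) ≤ i) (hi₂ : i ≤ (A.length : ℤ)) :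
    ((diagSet A B 0 i).Nonempty ↔ i = 0) ∧
    IsGreatest (diagSet A B 0 0) (lcp A B : ℤ) := by
  constructor
  · constructor
    · rintro ⟨x, hx1, hx2, hx3⟩
      rw [Nat.le_zero, editDist_eq_zero_iff] at hx3
      have h0x : 0 ≤ x := le_trans (le_max_left _ _) hx1
      have hix : i ≤ x := le_trans (le_max_right _ _) hx1
      have hlen := congrArg List.length hx3
      simp only [List.length_take] at hlen
      have hxn : x ≤ (A.length : ℤ) := le_trans hx2 (min_le_left _ _)
      have hxm : x - i ≤ (B.length : ℤ) := by
        have := le_trans hx2 (min_le_right _ _); omega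
      have h1 : x.toNat ≤ A.length := by omega
      have h2 : (x - i).toNat ≤ B.length := by omega
      rw [min_eq_left h1, min_eq_left h2] at hlen
      omega
    · rintro rfl
      exact ⟨0, by simp, by simp [editDist_eq_zero_iff], by
        simp [editDist_eq_zero_iff]⟩
  · constructor
    · have hle : lcp A B ≤ min A.length B.length := Nat.findGreatest_le _
      refine ⟨by simp, ?_, ?_⟩
      · omega
      · have hP : A.take (lcp A B) = B.take (lcp A B) :=
          Nat.findGreatest_spec (P := fun l => A.take l = B.take l) (m := 0) (Nat.zero_le _) rfl
        simp only [sub_zero, Int.toNat_natCast]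
        rw [Nat.le_zero, editDist_eq_zero_iff]
        exact hP
    · rintro x ⟨hx1, hx2, hx3⟩
      simp only [sub_zero] at hx3
      rw [Nat.le_zero, editDist_eq_zero_iff] at hx3
      have h0x : 0 ≤ x := le_trans (le_max_left _ _) hx1
      have hxn : x ≤ (A.length : ℤ) := le_trans hx2 (min_le_left _ _)
      have hxm : x ≤ (B.length : ℤ) := by
        have := le_trans hx2 (min_le_right _ _); omega
      have : x.toNat ≤ lcp A B :=
        Nat.le_findGreatest (by omega) hx3
      omega
end

section
/- Band localization of an optimal crossing point: for all lists A1, A2, B over a type with decidable equality, setting k = d(A1 ++ A2, B), there exists y with 0 ≤ y ≤ B.length such that |y − A1.length| ≤ k and d(A1 ++ A2, B) = d(A1, B.take y) + d(A2, B.drop y). Hence an optimal edit path can be chosen to cross every row of the DP grid within the diagonal band of half-width k. -/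
namespace EditDistBand

variable {α : Type*} [DecidableEq α]

lemma editDist_nil_nil : editDist ([] : List α) [] = 0 := by
  simp [editDist, levenshtein, Levenshtein.defaultCost]

lemma editDist_nil_cons (b : α) (B : List α) :
    editDist [] (b :: B) = 1 + editDist [] B := by
  simp [editDist, levenshtein, Levenshtein.defaultCost]

lemma editDist_cons_nil (a : α) (A : List α) :
    editDist (a :: A) [] = 1 + editDist A [] := by
  simp [editDist, levenshtein, Levenshtein.defaultCost]

lemma editDist_cons_cons (a : α) (A : List α) (b : α) (B : List α) :
    editDist (a :: A) (b :: B) =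
      min (1 + editDist A (b :: B))
        (min (1 + editDist (a :: A) B)
          ((if a = b then 0 else 1) + editDist A B)) := by
  simp [editDist, levenshtein, Levenshtein.defaultCost]

lemma editDist_le_insert (X : List α) (b : α) (Y : List α) :
    editDist X (b :: Y) ≤ 1 + editDist X Y := by
  cases X with
  | nil => rw [editDist_nil_cons]
  | cons x X =>
    rw [editDist_cons_cons]
    exact le_trans (min_le_right _ _) (min_le_left _ _)

lemma editDist_le_delete (a : α) (X Y : List α) :
    editDist (a :: X) Y ≤ 1 + editDist X Y := by
  cases Y with
  | nil => rw [editDist_cons_nil]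
  | cons y Y =>
    rw [editDist_cons_cons]
    exact min_le_left _ _

lemma editDist_le_subst (a : α) (X : List α) (b : α) (Y : List α) :
    editDist (a :: X) (b :: Y) ≤ (if a = b then 0 else 1) + editDist X Y := by
  rw [editDist_cons_cons]
  exact le_trans (min_le_right _ _) (min_le_right _ _)

/-- Subadditivity of edit distance under concatenation. -/
lemma editDist_append_le :
    ∀ (A₁ A₂ B₁ B₂ : List α),
      editDist (A₁ ++ A₂) (B₁ ++ B₂) ≤ editDist A₁ B₁ + editDist A₂ B₂
  | [], A₂, [], B₂ => by simp [editDist_nil_nil]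
  | [], A₂, b :: B₁, B₂ => by
      have ih := editDist_append_le [] A₂ B₁ B₂
      have h := editDist_le_insert A₂ b (B₁ ++ B₂)
      rw [editDist_nil_cons]
      simp only [List.nil_append, List.cons_append] at *
      omega
  | a :: A₁, A₂, [], B₂ => by
      have ih := editDist_append_le A₁ A₂ [] B₂
      have h := editDist_le_delete a (A₁ ++ A₂) B₂
      rw [editDist_cons_nil]
      simp only [List.nil_append, List.cons_append] at *
      omega
  | a :: A₁, A₂, b :: B₁, B₂ => by
      have ih₁ := editDist_append_le A₁ A₂ (b :: B₁) B₂
      have ih₂ := editDist_append_le (a :: A₁) A₂ B₁ B₂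
      have ih₃ := editDist_append_le A₁ A₂ B₁ B₂
      have h₁ := editDist_le_delete a (A₁ ++ A₂) ((b :: B₁) ++ B₂)
      have h₂ := editDist_le_insert ((a :: A₁) ++ A₂) b (B₁ ++ B₂)
      have h₃ := editDist_le_subst a (A₁ ++ A₂) b (B₁ ++ B₂)
      rw [editDist_cons_cons a A₁ b B₁]
      simp only [List.cons_append] at *
      omega
  termination_by A₁ _ B₁ _ => A₁.length + B₁.length

/-- The hard direction: some split point of `B` achieves the total distance. -/
lemma exists_split :
    ∀ (A₁ A₂ B : List α), ∃ y, y ≤ B.length ∧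
      editDist A₁ (B.take y) + editDist A₂ (B.drop y) ≤ editDist (A₁ ++ A₂) B
  | [], A₂, B => ⟨0, by simp [editDist_nil_nil]⟩
  | a :: A₁, A₂, [] => by
      obtain ⟨y, _, hy⟩ := exists_split A₁ A₂ []
      refine ⟨0, le_refl _, ?_⟩
      have h := editDist_le_delete a A₁ ([] : List α)
      have h' := editDist_cons_nil a (A₁ ++ A₂)
      simp only [List.length_nil, Nat.le_zero, List.take_nil, List.drop_nil,
        List.cons_append] at *
      omega
  | a :: A₁, A₂, b :: B => by
      rw [show (a :: A₁) ++ A₂ = a :: (A₁ ++ A₂) from rfl, editDist_cons_cons]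
      rcases min_cases (1 + editDist (A₁ ++ A₂) (b :: B))
          (min (1 + editDist (a :: (A₁ ++ A₂)) B)
            ((if a = b then 0 else 1) + editDist (A₁ ++ A₂) B)) with
        ⟨hm, _⟩ | ⟨hm, _⟩
      · -- delete branch
        obtain ⟨y, hy, hle⟩ := exists_split A₁ A₂ (b :: B)
        refine ⟨y, hy, ?_⟩
        have h := editDist_le_delete a A₁ ((b :: B).take y)
        omega
      · rw [hm]
        rcases min_cases (1 + editDist (a :: (A₁ ++ A₂)) B)
            ((if a = b then 0 else 1) + editDist (A₁ ++ A₂) B) with ⟨hm2, _⟩ | ⟨hm2, _⟩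
        · -- insert branch
          obtain ⟨y, hy, hle⟩ := exists_split (a :: A₁) A₂ B
          refine ⟨y + 1, by simpa using hy, ?_⟩
          have h := editDist_le_insert (a :: A₁) b (B.take y)
          simp only [List.take_succ_cons, List.drop_succ_cons, List.cons_append] at *
          omega
        · -- substitution branch
          obtain ⟨y, hy, hle⟩ := exists_split A₁ A₂ B
          refine ⟨y + 1, by simpa using hy, ?_⟩
          have h := editDist_le_subst a A₁ b (B.take y)
          simp only [List.take_succ_cons, List.drop_succ_cons] at *
          omega
  termination_by A₁ _ B => A₁.length + B.length

/-- Edit distance is at least the difference of lengths. -/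
lemma abs_length_sub_le :
    ∀ (X Y : List α), |(X.length : ℤ) - (Y.length : ℤ)| ≤ (editDist X Y : ℤ)
  | [], [] => by simp [editDist_nil_nil]
  | [], y :: Y => by
      have ih := abs_length_sub_le ([] : List α) Y
      rw [editDist_nil_cons]
      rw [abs_le] at *
      simp only [List.length_nil, List.length_cons] at *
      push_cast at *
      omega
  | x :: X, [] => by
      have ih := abs_length_sub_le X ([] : List α)
      rw [editDist_cons_nil]
      rw [abs_le] at *
      simp only [List.length_nil, List.length_cons] at *
      push_cast at *
      omega
  | x :: X, y :: Y => by
      have ih₁ := abs_length_sub_le X (y :: Y)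
      have ih₂ := abs_length_sub_le (x :: X) Y
      have ih₃ := abs_length_sub_le X Y
      rw [editDist_cons_cons, abs_le]
      rw [abs_le] at ih₁ ih₂ ih₃
      simp only [List.length_cons] at *
      push_cast at *
      omega
  termination_by X Y => X.length + Y.length

end EditDistBand

/-- Band localization of an optimal crossing point: with `k = d(A₁ ++ A₂, B)`, some optimal
split point `y` of `B` satisfies `|y - |A₁|| ≤ k`, i.e. an optimal edit path can be chosen to
cross every row of the DP grid within the diagonal band of half-width `k`. -/
theorem editDist_exists_split_in_band {α : Type*} [DecidableEq α] (A₁ A₂ B : List α) :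
    ∃ y : ℕ, y ≤ B.length ∧
      |(y : ℤ) - (A₁.length : ℤ)| ≤ (editDist (A₁ ++ A₂) B : ℤ) ∧
      editDist (A₁ ++ A₂) B = editDist A₁ (B.take y) + editDist A₂ (B.drop y) := by
  obtain ⟨y, hy, hle⟩ := EditDistBand.exists_split A₁ A₂ B
  have hge : editDist (A₁ ++ A₂) B ≤ editDist A₁ (B.take y) + editDist A₂ (B.drop y) := by
    have := EditDistBand.editDist_append_le A₁ A₂ (B.take y) (B.drop y)
    rwa [List.take_append_drop] at this
  have heq : editDist (A₁ ++ A₂) B = editDist A₁ (B.take y) + editDist A₂ (B.drop y) :=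
    le_antisymm hge hle
  refine ⟨y, hy, ?_, heq⟩
  have hband := EditDistBand.abs_length_sub_le A₁ (B.take y)
  rw [List.length_take_of_le hy] at hband
  rw [abs_sub_comm]
  calc |(A₁.length : ℤ) - y| ≤ (editDist A₁ (B.take y) : ℤ) := hband
    _ ≤ (editDist (A₁ ++ A₂) B : ℤ) := by exact_mod_cast heq ▸ Nat.le_add_right _ _
end

section
/- LCP of lexicographically sorted strings via range minimum: let α be a linear order and s_0 ≤ s_1 ≤ … ≤ s_{N−1} be lists over α that are non-decreasing in the lexicographic order on lists. Then for all indices i < j < N, lcp(s_i, s_j) = min over i < l ≤ j of lcp(s_{l−1}, s_l). (This is the fact underlying answering LCP queries on a suffix array by a range-minimum query over the LCP array of adjacent ranked suffixes.) -/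
section aux
variable {α : Type*} [LinearOrder α]

lemma cons_le_cons' (a : α) {l l' : List α} (h : l ≤ l') : (a :: l) ≤ (a :: l') := by
  rcases lt_or_eq_of_le h with h | rfl
  · exact le_of_lt (List.Lex.cons h)
  · exact le_rfl

lemma take_lex_le {A B : List α} (h : List.Lex (· < ·) A B) (k : ℕ) :
    A.take k ≤ B.take k := by
  induction h generalizing k with
  | nil =>
    cases k with
    | zero => simp
    | succ k => exact le_of_lt List.Lex.nil
  | @cons a l₁ l₂ _ ih =>
    cases k with
    | zero => simp
    | succ k => simpa using cons_le_cons' a (ih k)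
  | @rel a₁ l₁ a₂ l₂ hr =>
    cases k with
    | zero => simp
    | succ k => exact le_of_lt (List.Lex.rel hr)

lemma take_le_take (k : ℕ) {A B : List α} (h : A ≤ B) : A.take k ≤ B.take k := by
  rcases lt_or_eq_of_le h with h | rfl
  · exact take_lex_le h k
  · exact le_rfl

lemma take_lcp_eq {A B : List α} : A.take (lcp A B) = B.take (lcp A B) :=
  Nat.findGreatest_spec (P := fun l => A.take l = B.take l) (Nat.zero_le _) rfl

lemma lcp_le_left {A B : List α} : lcp A B ≤ A.length :=
  le_trans (Nat.findGreatest_le _) (min_le_left _ _)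

lemma lcp_le_right {A B : List α} : lcp A B ≤ B.length :=
  le_trans (Nat.findGreatest_le _) (min_le_right _ _)

lemma le_lcp {A B : List α} {k : ℕ} (h1 : k ≤ A.length) (h2 : k ≤ B.length)
    (h : A.take k = B.take k) : k ≤ lcp A B :=
  Nat.le_findGreatest (le_min h1 h2) h

lemma lcp_mid {A B C : List α} (hAB : A ≤ B) (hBC : B ≤ C) :
    lcp A C = min (lcp A B) (lcp B C) := by
  apply le_antisymm
  · -- show lcp A C ≤ both
    set q := lcp A C with hq
    have hqA : q ≤ A.length := lcp_le_left
    have hqC : q ≤ C.length := lcp_le_right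
    have hAC : A.take q = C.take q := take_lcp_eq
    have h1 : A.take q ≤ B.take q := take_le_take q hAB
    have h2 : B.take q ≤ C.take q := take_le_take q hBC
    have hABq : A.take q = B.take q := le_antisymm h1 (hAC ▸ h2)
    have hBCq : B.take q = C.take q := hABq ▸ hAC
    have hqB : q ≤ B.length := by
      have := congrArg List.length hABq
      simp only [List.length_take] at this
      omega
    exact le_min (le_lcp hqA hqB hABq) (le_lcp hqB hqC hBCq)
  · set p := min (lcp A B) (lcp B C) with hp
    have h1 : A.take p = B.take p := by
      have := take_lcp_eq (A := A) (B := B)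
      have : A.take p = B.take p := by
        have hple : p ≤ lcp A B := min_le_left _ _
        calc A.take p = (A.take (lcp A B)).take p := by
              rw [List.take_take, min_eq_left hple]
          _ = (B.take (lcp A B)).take p := by rw [take_lcp_eq]
          _ = B.take p := by rw [List.take_take, min_eq_left hple]
      exact this
    have h2 : B.take p = C.take p := by
      have hple : p ≤ lcp B C := min_le_right _ _
      calc B.take p = (B.take (lcp B C)).take p := by
            rw [List.take_take, min_eq_left hple]
        _ = (C.take (lcp B C)).take p := by rw [take_lcp_eq]
        _ = C.take p := by rw [List.take_take, min_eq_left hple]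
    exact le_lcp (le_trans (min_le_left _ _) lcp_le_left)
      (le_trans (min_le_right _ _) lcp_le_right) (h1.trans h2)

end aux

/-- LCP of lexicographically sorted strings via range minimum: if `s 0 ≤ s 1 ≤ … ≤ s (N-1)`
in the lexicographic order on lists, then for `i < j < N` the LCP of `s i` and `s j` is the
minimum of the LCPs of adjacent pairs in between. -/
theorem lcp_sorted_range_min {α : Type*} [LinearOrder α] (N : ℕ) (s : ℕ → List α)
    (hs : ∀ a b : ℕ, a ≤ b → b < N → s a ≤ s b)
    (i j : ℕ) (hij : i < j) (hjN : j < N) :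
    lcp (s i) (s j) =
      (Finset.Icc (i + 1) j).inf' (Finset.nonempty_Icc.mpr hij)
        (fun l => lcp (s (l - 1)) (s l)) := by
  induction j with
  | zero => omega
  | succ j ih =>
    rcases Nat.lt_or_ge i j with hij' | hij'
    · have hjN' : j < N := by omega
      have hsplit : Finset.Icc (i + 1) (j + 1) = insert (j + 1) (Finset.Icc (i + 1) j) := by
        ext x; simp [Finset.mem_Icc, Finset.mem_insert]; omega
      have hne : (Finset.Icc (i + 1) j).Nonempty := Finset.nonempty_Icc.mpr hij'
      rw [lcp_mid (hs i j (le_of_lt hij') hjN') (hs j (j + 1) (by omega) hjN)]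
      rw [ih hij' hjN']
      have : (Finset.Icc (i + 1) (j + 1)).inf' (Finset.nonempty_Icc.mpr hij)
          (fun l => lcp (s (l - 1)) (s l)) =
          min (lcp (s (j + 1 - 1)) (s (j + 1)))
            (Finset.inf' _ hne (fun l => lcp (s (l - 1)) (s l))) := by
        rw [Finset.inf'_congr (Finset.nonempty_Icc.mpr hij) hsplit (fun _ _ => rfl)]
        exact Finset.inf'_insert hne _
      rw [this]
      simp [min_comm]
    · have : i = j := by omega
      subst this
      have : Finset.Icc (i + 1) (i + 1) = {i + 1} := Finset.Icc_self _
      rw [Finset.inf'_congr (Finset.nonempty_Icc.mpr hij) this (fun _ _ => rfl)]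
      simp
end
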